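/- arXiv:1411.0293 — 5 statements merged into one kernel-verified Lean document; each statement's English description precedes it below -/
import Mathlib

section
/- For all natural numbers h and m, the Chebyshev polynomials of the second kind satisfy the product formula U_h · U_m = Σ_{k=0}^{min(h,m)} U_{h+m−2k} in the polynomial ring ℤ[X]. -/
open Polynomial Polynomial.Chebyshev Finset

private lemma chebyshev_two_X_mul_U (n : ℤ) :
    (2 * X : ℤ[X]) * U ℤ n = U ℤ (n + 1) + U ℤ (n - 1) := by
  linear_combination - U_add_one ℤ n

private lemma chebyshev_U_mul_aux (m : ℕ) : ∀ h : ℤ,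
    U ℤ h * U ℤ m = ∑ k ∈ Finset.range (m + 1), U ℤ (h + m - 2 * k) := by
  induction m using Nat.twoStepInduction with
  | zero => intro h; simp
  | one =>
    intro h
    rw [Nat.cast_one, U_one, Finset.sum_range_succ, Finset.sum_range_one]
    rw [mul_comm (U ℤ h), chebyshev_two_X_mul_U]
    push_cast
    ring_nf
  | more m ih1 ih2 =>
    intro h
    have key : U ℤ h * U ℤ ((m : ℤ) + 2)
        = 2 * X * (U ℤ h * U ℤ ((m : ℤ) + 1)) - U ℤ h * U ℤ m := by
      linear_combination U ℤ h * U_add_two ℤ (m : ℤ)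
    push_cast
    push_cast at ih1 ih2
    rw [key, ih2, ih1, Finset.mul_sum]
    have step : ∀ k ∈ Finset.range (m + 2),
        2 * X * U ℤ (h + ((m : ℤ) + 1) - 2 * k)
          = U ℤ (h + ((m : ℤ) + 1) - 2 * k + 1) + U ℤ (h + ((m : ℤ) + 1) - 2 * k - 1) := by
      intro k _
      exact chebyshev_two_X_mul_U _
    rw [Finset.sum_congr rfl step, Finset.sum_add_distrib]
    rw [Finset.sum_range_succ (fun k => U ℤ (h + ((m : ℤ) + 1) - 2 * k - 1)) (m + 1)]
    rw [Finset.sum_range_succ (fun k => U ℤ (h + ((m : ℤ) + 2) - 2 * k)) (m + 2)]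
    have e1 : ∀ k : ℕ, h + ((m : ℤ) + 1) - 2 * k + 1 = h + ((m : ℤ) + 2) - 2 * k := by
      intro k; ring
    have e2 : ∀ k : ℕ, k ≤ m → h + ((m : ℤ) + 1) - 2 * k - 1 = h + (m : ℤ) - 2 * k := by
      intro k _; ring
    have e3 : h + ((m : ℤ) + 1) - 2 * ((m : ℤ) + 1) - 1 = h + ((m : ℤ) + 2) - 2 * ((m : ℤ) + 2) := by
      ring
    simp only [e1]
    rw [show ∑ k ∈ Finset.range (m + 1), U ℤ (h + ((m : ℤ) + 1) - 2 * k - 1)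
        = ∑ k ∈ Finset.range (m + 1), U ℤ (h + (m : ℤ) - 2 * k) from
      Finset.sum_congr rfl fun k hk => by
        rw [e2 k (Nat.lt_succ_iff.mp (Finset.mem_range.mp hk))]]
    push_cast
    rw [show h + ((m : ℤ) + 1) - 2 * ((m : ℤ) + 1) - 1 = h + ((m : ℤ) + 2) - 2 * ((m : ℤ) + 2) from e3]
    ring

/-- The product formula for Chebyshev polynomials of the second kind:
`U_h · U_m = Σ_{k=0}^{min(h,m)} U_{h+m−2k}` in `ℤ[X]`. -/
theorem chebyshev_U_mul (h m : ℕ) :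
    U ℤ h * U ℤ m = ∑ k ∈ Finset.range (min h m + 1), U ℤ ((h : ℤ) + m - 2 * k) := by
  rcases le_total m h with hle | hle
  · rw [min_eq_right hle]
    exact chebyshev_U_mul_aux m h
  · rw [min_eq_left hle, mul_comm]
    have := chebyshev_U_mul_aux h (m : ℤ)
    simpa [add_comm (m : ℤ) (h : ℤ)] using this
end

section
/- Let d ≥ 1, K = ℤ^d × ℤ × {−1,1}, k = (l,j,a), with dist(k,k') = 1 if (l,j) = (l',j') and a ≠ a', and dist(k,k') = max(|l−l'|_∞, |j−j'|) otherwise. Let N ≥ 1, γ > 0, τ > 0, let d_• : K → ℂ and R : K × K → ℂ, and assume |d_k − d_{k'}| ≥ γ·max(1, |l−l'|_∞)^{−τ} for all k ≠ k' with dist(k,k') ≤ N. Define A_{k,k'} = R_{k,k'}/(d_k − d_{k'}) for 0 < dist(k,k') ≤ N and A_{k,k'} = 0 otherwise. Then for every s ≥ 0, |A|_s ≤ 2 γ^{−1} N^{τ} |R|_s. -/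
open scoped Classical ENNReal NNReal

/-- The set of signs `{−1, 1}`. -/
abbrev Sgn : Type := ({-1, 1} : Finset ℤ)

/-- The index set `K = ℤ^d × ℤ × {−1,1}`, with `i = (l,j) ∈ ℤ^{d+1}`. -/
abbrev KIdx (d : ℕ) : Type := ((Fin d → ℤ) × ℤ) × Sgn

noncomputable section

/-- `dist(k,k') = 1` if `(l,j) = (l',j')` and `a ≠ a'`, and
`dist(k,k') = max(|l−l'|_∞, |j−j'|)` otherwise. -/
def kdist {d : ℕ} (k k' : KIdx d) : ℕ :=
  if k.1 = k'.1 ∧ k.2 ≠ k'.2 then 1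
  else max (Finset.univ.sup fun p => (k.1.1 p - k'.1.1 p).natAbs) (k.1.2 - k'.1.2).natAbs

/-- The `ℓ²`-operator norm `‖·‖₀` of a `2×2` complex matrix indexed by `Sgn`. -/
def opNorm0 (m : Matrix Sgn Sgn ℂ) : ℝ≥0∞ :=
  ‖Matrix.toEuclideanCLM (𝕜 := ℂ) m‖₊

/-- The `2×2` block `M_{{i}}^{{i'}}`. -/
def blk {G : Type*} (M : G × Sgn → G × Sgn → ℂ) (i i' : G) : Matrix Sgn Sgn ℂ :=
  fun a a' => M (i, a) (i', a')

/-- `[M(i)] = sup_{h−h'=i} ‖M_{{h}}^{{h'}}‖₀`. -/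
def blockSup {G : Type*} [AddCommGroup G] (M : G × Sgn → G × Sgn → ℂ) (i : G) : ℝ≥0∞ :=
  ⨆ h : G, opNorm0 (blk M h (h - i))

/-- `⟨i⟩ = max(1, sz i)`. -/
def ang {G : Type*} (sz : G → ℕ) (i : G) : ℕ := max 1 (sz i)

/-- The `s`-decay norm `|M|_s ∈ [0,∞]`: `|M|_s² = Σ_i ⟨i⟩^{2s} [M(i)]²`. -/
def dnorm {G : Type*} [AddCommGroup G] (sz : G → ℕ) (s : ℝ)
    (M : G × Sgn → G × Sgn → ℂ) : ℝ≥0∞ :=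
  (∑' i : G, (ang sz i : ℝ≥0∞) ^ (2 * s) * blockSup M i ^ 2) ^ (1 / 2 : ℝ)

/-- `|i|_∞` on `ℤ^{d+1} = ℤ^d × ℤ`. -/
def szI (d : ℕ) (i : (Fin d → ℤ) × ℤ) : ℕ :=
  max (Finset.univ.sup fun p => (i.1 p).natAbs) i.2.natAbs

end

section Helpers

lemma sgn_card : (Finset.univ : Finset Sgn).card = 2 := by
  rw [Finset.card_univ, Fintype.card_coe]; decide

lemma euclid_apply (m : Matrix Sgn Sgn ℂ) (x : EuclideanSpace ℂ Sgn) (a : Sgn) :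
    (Matrix.toEuclideanCLM (𝕜 := ℂ) m x) a = ∑ a', m a a' * x a' := by
  have : x = (WithLp.equiv 2 (Sgn → ℂ)).symm (WithLp.equiv 2 (Sgn → ℂ) x) := rfl
  rw [Matrix.ofLp_toEuclideanCLM]
  simp [Matrix.mulVec, dotProduct]

lemma euclid_coord_le (y : EuclideanSpace ℂ Sgn) (a : Sgn) : ‖y a‖ ≤ ‖y‖ := by
  rw [EuclideanSpace.norm_eq]
  rw [show ‖y a‖ = Real.sqrt (‖y a‖ ^ 2) by rw [Real.sqrt_sq (norm_nonneg _)]]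
  apply Real.sqrt_le_sqrt
  exact Finset.single_le_sum (f := fun i => ‖y i‖ ^ 2) (fun i _ => by positivity) (Finset.mem_univ a)

lemma entry_le_opNorm (m : Matrix Sgn Sgn ℂ) (a a' : Sgn) :
    ‖m a a'‖ ≤ ‖Matrix.toEuclideanCLM (𝕜 := ℂ) m‖ := by
  have h1 : ‖m a a'‖ ≤ ‖Matrix.toEuclideanCLM (𝕜 := ℂ) m (EuclideanSpace.single a' 1)‖ := by
    have := euclid_coord_le (Matrix.toEuclideanCLM (𝕜 := ℂ) m (EuclideanSpace.single a' 1)) a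
    rwa [euclid_apply, Finset.sum_eq_single a'
      (fun b _ hb => by rw [EuclideanSpace.single_apply, if_neg hb, mul_zero])
      (fun hb => absurd (Finset.mem_univ a') hb), EuclideanSpace.single_apply,
      if_pos rfl, mul_one] at this
  calc ‖m a a'‖ ≤ _ := h1
    _ ≤ ‖Matrix.toEuclideanCLM (𝕜 := ℂ) m‖ * ‖(EuclideanSpace.single a' (1:ℂ))‖ :=
        ContinuousLinearMap.le_opNorm _ _
    _ = ‖Matrix.toEuclideanCLM (𝕜 := ℂ) m‖ := by
        rw [EuclideanSpace.norm_single, norm_one, mul_one]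

lemma opNorm_le_two_mul (m : Matrix Sgn Sgn ℂ) (C : ℝ) (hC : 0 ≤ C)
    (h : ∀ a a', ‖m a a'‖ ≤ C) :
    ‖Matrix.toEuclideanCLM (𝕜 := ℂ) m‖ ≤ 2 * C := by
  refine ContinuousLinearMap.opNorm_le_bound _ (by positivity) fun x => ?_
  have hx : ‖x‖ = Real.sqrt (∑ a', ‖x a'‖ ^ 2) := EuclideanSpace.norm_eq x
  have hTx : ‖Matrix.toEuclideanCLM (𝕜 := ℂ) m x‖
      = Real.sqrt (∑ a, ‖Matrix.toEuclideanCLM (𝕜 := ℂ) m x a‖ ^ 2) :=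
    EuclideanSpace.norm_eq _
  set L : ℝ := ∑ a', ‖x a'‖ with hL
  have hterm : ∀ a : Sgn, ‖Matrix.toEuclideanCLM (𝕜 := ℂ) m x a‖ ≤ C * L := by
    intro a
    rw [euclid_apply]
    calc ‖∑ a', m a a' * x a'‖ ≤ ∑ a', ‖m a a' * x a'‖ := norm_sum_le _ _
      _ ≤ ∑ a', C * ‖x a'‖ := Finset.sum_le_sum fun a' _ => by
          rw [norm_mul]; exact mul_le_mul_of_nonneg_right (h a a') (norm_nonneg _)
      _ = C * L := by rw [hL, Finset.mul_sum]
  have hL2 : L ^ 2 ≤ 2 * ∑ a', ‖x a'‖ ^ 2 := by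
    have := sq_sum_le_card_mul_sum_sq (s := (Finset.univ : Finset Sgn)) (f := fun a' => ‖x a'‖)
    rwa [sgn_card] at this
  have hsum : ∑ a, ‖Matrix.toEuclideanCLM (𝕜 := ℂ) m x a‖ ^ 2
      ≤ (2 * C) ^ 2 * ∑ a', ‖x a'‖ ^ 2 := by
    calc ∑ a, ‖Matrix.toEuclideanCLM (𝕜 := ℂ) m x a‖ ^ 2
        ≤ ∑ _a : Sgn, (C * L) ^ 2 := Finset.sum_le_sum fun a _ =>
          pow_le_pow_left₀ (norm_nonneg _) (hterm a) 2
      _ = 2 * (C * L) ^ 2 := by rw [Finset.sum_const, sgn_card]; ring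
      _ = 2 * C ^ 2 * L ^ 2 := by ring
      _ ≤ 2 * C ^ 2 * (2 * ∑ a', ‖x a'‖ ^ 2) := by
          apply mul_le_mul_of_nonneg_left hL2 (by positivity)
      _ = (2 * C) ^ 2 * ∑ a', ‖x a'‖ ^ 2 := by ring
  rw [hTx, hx]
  calc Real.sqrt (∑ a, ‖Matrix.toEuclideanCLM (𝕜 := ℂ) m x a‖ ^ 2)
      ≤ Real.sqrt ((2 * C) ^ 2 * ∑ a', ‖x a'‖ ^ 2) := Real.sqrt_le_sqrt hsum
    _ = (2 * C) * Real.sqrt (∑ a', ‖x a'‖ ^ 2) := by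
        rw [Real.sqrt_mul (by positivity), Real.sqrt_sq (by positivity)]

end Helpers

/-- If the small divisors satisfy `|d_k − d_{k'}| ≥ γ ⟨l−l'⟩^{−τ}` for all `k ≠ k'` with
`dist(k,k') ≤ N`, then the solution `A` of the homological equation satisfies
`|A|_s ≤ 2 γ⁻¹ N^τ |R|_s` for every `s ≥ 0`. -/
theorem homological_solution_decay_estimate (d : ℕ) (hd : 1 ≤ d) (N : ℕ) (hN : 1 ≤ N)
    (γ τ : ℝ) (hγ : 0 < γ) (hτ : 0 < τ)
    (dk : KIdx d → ℂ) (R : KIdx d → KIdx d → ℂ)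
    (hsep : ∀ k k' : KIdx d, k ≠ k' → kdist k k' ≤ N →
      γ * (max 1 ((Finset.univ.sup fun p => (k.1.1 p - k'.1.1 p).natAbs) : ℕ) : ℝ) ^ (-τ)
        ≤ ‖dk k - dk k'‖)
    (A : KIdx d → KIdx d → ℂ)
    (hA : ∀ k k' : KIdx d,
      A k k' = if 0 < kdist k k' ∧ kdist k k' ≤ N then R k k' / (dk k - dk k') else 0) :
    ∀ s : ℝ, 0 ≤ s →
      dnorm (szI d) s A ≤ 2 * (ENNReal.ofReal γ)⁻¹ * (N : ℝ≥0∞) ^ (τ : ℝ) * dnorm (szI d) s R := by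
  have hNR : (1:ℝ) ≤ (N:ℝ) := by exact_mod_cast hN
  have hNpos : (0:ℝ) < (N:ℝ) := lt_of_lt_of_le one_pos hNR
  have hNt : (0:ℝ) < (N:ℝ) ^ τ := Real.rpow_pos_of_pos hNpos τ
  -- entrywise bound
  have hentry : ∀ k k' : KIdx d, ‖A k k'‖ ≤ (γ⁻¹ * (N:ℝ) ^ τ) * ‖R k k'‖ := by
    intro k k'
    rw [hA]
    split_ifs with hcond
    · obtain ⟨h0, hNle⟩ := hcond
      have hkk : k ≠ k' := by
        rintro rfl
        simp [kdist] at h0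
      set Mn : ℕ := (Finset.univ.sup fun p => (k.1.1 p - k'.1.1 p).natAbs) with hMn
      have hsupN : Mn ≤ N := by
        by_cases hc : k.1 = k'.1 ∧ k.2 ≠ k'.2
        · have hz : Mn = 0 := by
            apply Nat.le_zero.mp
            apply Finset.sup_le
            intro p _
            rw [hc.1]
            simp
          rw [hz]; exact Nat.zero_le N
        · have hd' : kdist k k' = max Mn (k.1.2 - k'.1.2).natAbs := by
            rw [kdist, if_neg hc]
          have : max Mn (k.1.2 - k'.1.2).natAbs ≤ N := by rw [← hd']; exact hNle
          exact le_trans (le_max_left _ _) this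
      have hMpos : (0:ℝ) < max (1:ℝ) (Mn:ℝ) := lt_of_lt_of_le one_pos (le_max_left _ _)
      have hMNR : max (1:ℝ) (Mn:ℝ) ≤ (N:ℝ) := max_le hNR (by exact_mod_cast hsupN)
      have hmono : (N:ℝ) ^ (-τ) ≤ (max (1:ℝ) (Mn:ℝ)) ^ (-τ) :=
        Real.rpow_le_rpow_of_nonpos hMpos hMNR (neg_nonpos.mpr hτ.le)
      have hge : γ * (N:ℝ) ^ (-τ) ≤ ‖dk k - dk k'‖ := by
        refine le_trans ?_ (hsep k k' hkk hNle)
        exact mul_le_mul_of_nonneg_left hmono hγ.le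
      have hdpos : (0:ℝ) < γ * (N:ℝ) ^ (-τ) := by positivity
      rw [norm_div]
      calc ‖R k k'‖ / ‖dk k - dk k'‖ ≤ ‖R k k'‖ / (γ * (N:ℝ) ^ (-τ)) :=
            div_le_div_of_nonneg_left (norm_nonneg _) hdpos hge
        _ = (γ⁻¹ * (N:ℝ) ^ τ) * ‖R k k'‖ := by
            rw [div_eq_mul_inv, mul_inv, Real.rpow_neg hNpos.le, inv_inv]
            ring
    · simp only [norm_zero]
      positivity
  -- block bound
  set c : ℝ≥0∞ := 2 * (ENNReal.ofReal γ)⁻¹ * (N : ℝ≥0∞) ^ (τ : ℝ) with hc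
  have hcoe : c = ENNReal.ofReal (2 * (γ⁻¹ * (N:ℝ) ^ τ)) := by
    rw [ENNReal.ofReal_mul (by norm_num), ENNReal.ofReal_mul (by positivity),
      ENNReal.ofReal_inv_of_pos hγ, ← ENNReal.ofReal_rpow_of_pos hNpos,
      ENNReal.ofReal_natCast, ENNReal.ofReal_ofNat, hc, mul_assoc]
  have hblk : ∀ h h' : (Fin d → ℤ) × ℤ, opNorm0 (blk A h h') ≤ c * opNorm0 (blk R h h') := by
    intro h h'
    have hTR : (0:ℝ) ≤ ‖Matrix.toEuclideanCLM (𝕜 := ℂ) (blk R h h')‖ := norm_nonneg _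
    have hAop : ‖Matrix.toEuclideanCLM (𝕜 := ℂ) (blk A h h')‖
        ≤ 2 * ((γ⁻¹ * (N:ℝ) ^ τ) * ‖Matrix.toEuclideanCLM (𝕜 := ℂ) (blk R h h')‖) := by
      refine opNorm_le_two_mul _ _ (by positivity) fun a a' => ?_
      exact le_trans (hentry (h, a) (h', a'))
        (mul_le_mul_of_nonneg_left (entry_le_opNorm (blk R h h') a a') (by positivity))
    rw [opNorm0, opNorm0, ← enorm_eq_nnnorm, ← ofReal_norm,
      ← enorm_eq_nnnorm, ← ofReal_norm, hcoe, ← ENNReal.ofReal_mul (by positivity)]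
    exact ENNReal.ofReal_le_ofReal (by linarith [hAop])
  have hbs : ∀ i : (Fin d → ℤ) × ℤ, blockSup A i ≤ c * blockSup R i := by
    intro i
    rw [blockSup]
    refine iSup_le fun h => le_trans (hblk h (h - i)) ?_
    exact mul_le_mul_right (le_iSup (fun h => opNorm0 (blk R h (h - i))) h) c
  intro s hs
  rw [dnorm, dnorm]
  have hsum : (∑' i : (Fin d → ℤ) × ℤ, (ang (szI d) i : ℝ≥0∞) ^ (2 * s) * blockSup A i ^ 2)
      ≤ c ^ 2 * ∑' i : (Fin d → ℤ) × ℤ, (ang (szI d) i : ℝ≥0∞) ^ (2 * s) * blockSup R i ^ 2 := by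
    rw [← ENNReal.tsum_mul_left]
    refine ENNReal.tsum_le_tsum fun i => ?_
    calc (ang (szI d) i : ℝ≥0∞) ^ (2 * s) * blockSup A i ^ 2
        ≤ (ang (szI d) i : ℝ≥0∞) ^ (2 * s) * (c * blockSup R i) ^ 2 :=
          mul_le_mul_right (pow_le_pow_left₀ zero_le (hbs i) 2) _
      _ = c ^ 2 * ((ang (szI d) i : ℝ≥0∞) ^ (2 * s) * blockSup R i ^ 2) := by ring
  calc (∑' i : (Fin d → ℤ) × ℤ, (ang (szI d) i : ℝ≥0∞) ^ (2 * s) * blockSup A i ^ 2) ^ (1/2 : ℝ)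
      ≤ (c ^ 2 * ∑' i : (Fin d → ℤ) × ℤ,
          (ang (szI d) i : ℝ≥0∞) ^ (2 * s) * blockSup R i ^ 2) ^ (1/2 : ℝ) :=
        ENNReal.rpow_le_rpow hsum (by norm_num)
    _ = c * (∑' i : (Fin d → ℤ) × ℤ,
          (ang (szI d) i : ℝ≥0∞) ^ (2 * s) * blockSup R i ^ 2) ^ (1/2 : ℝ) := by
        rw [ENNReal.mul_rpow_of_nonneg _ _ (by norm_num), ← ENNReal.rpow_natCast c 2,
          ← ENNReal.rpow_mul]
        norm_num
end

section
/- Let ρ = 1/√8 and Λ₊ = {m/√8 : m ∈ ℕ}. Let j, j' ∈ Λ₊, let a, a' ∈ {−1, 1} with (j,a) ≠ (j',a'), and let L ≥ 1 be a real number. If |a(j+ρ)² − a'(j'+ρ)²| ≤ 6L, then j ≤ 17L and j' ≤ 17L. -/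
lemma resonant_aux (ρ : ℝ) (hρ : ρ = 1 / Real.sqrt 8)
    (j j' : ℝ) (hj : ∃ m : ℕ, j = (m : ℝ) / Real.sqrt 8)
    (hj' : ∃ m : ℕ, j' = (m : ℝ) / Real.sqrt 8)
    (a a' : ℤ) (ha : a = -1 ∨ a = 1) (ha' : a' = -1 ∨ a' = 1)
    (hne : (j, a) ≠ (j', a'))
    (L : ℝ) (hL : 1 ≤ L)
    (h : |(a : ℝ) * (j + ρ) ^ 2 - (a' : ℝ) * (j' + ρ) ^ 2| ≤ 6 * L) :
    j ≤ 17 * L := by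
  obtain ⟨m, hm⟩ := hj
  obtain ⟨m', hm'⟩ := hj'
  have hs : (0:ℝ) < Real.sqrt 8 := Real.sqrt_pos.mpr (by norm_num)
  have hs2 : Real.sqrt 8 * Real.sqrt 8 = 8 := Real.mul_self_sqrt (by norm_num)
  have hs17 : Real.sqrt 8 ≤ 17/6 := by nlinarith
  have hjnn : 0 ≤ j := by rw [hm]; positivity
  have hj'nn : 0 ≤ j' := by rw [hm']; positivity
  have hρnn : 0 ≤ ρ := by rw [hρ]; positivity
  have same : a = a' → j ≤ 17 * L := by
    intro haa
    subst haa
    have hjj : j ≠ j' := fun e => hne (by simp [e])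
    have hmm : m ≠ m' := fun e => hjj (by rw [hm, hm', e])
    have hd : (1:ℝ) ≤ |(m:ℝ) - m'| := by
      have h0 : ((m:ℤ) - m') ≠ 0 := sub_ne_zero.mpr (by exact_mod_cast hmm)
      have h1 : (1:ℤ) ≤ |(m:ℤ) - m'| := Int.one_le_abs h0
      exact_mod_cast h1
    have haone : |(a:ℝ)| = 1 := by rcases ha with h1 | h1 <;> subst h1 <;> norm_num
    have habs : |j - j'| * (j + j' + 2*ρ) ≤ 6 * L := by
      have hcv : |(j - j') * (j + j' + 2*ρ)| ≤ 6 * L := by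
        calc |(j - j') * (j + j' + 2*ρ)|
            = |(a:ℝ)| * |(j + ρ) ^ 2 - (j' + ρ) ^ 2| := by
              rw [haone, one_mul]; congr 1; ring
          _ = |(a:ℝ) * (j + ρ) ^ 2 - (a:ℝ) * (j' + ρ) ^ 2| := by
              rw [← abs_mul]; congr 1; ring
          _ ≤ 6 * L := h
      rwa [abs_mul, abs_of_nonneg (show (0:ℝ) ≤ j + j' + 2*ρ by linarith)] at hcv
    have hd2 : (1:ℝ) ≤ |j - j'| * Real.sqrt 8 := by
      rw [hm, hm', div_sub_div_same, abs_div, abs_of_pos hs,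
        div_mul_cancel₀ _ (ne_of_gt hs)]
      exact hd
    nlinarith [mul_le_mul_of_nonneg_right hd2 (show (0:ℝ) ≤ j + j' + 2*ρ by linarith),
      mul_le_mul_of_nonneg_right habs (le_of_lt hs), hs17, hL, hs]
  have opp : (a:ℝ) * (j + ρ) ^ 2 - (a':ℝ) * (j' + ρ) ^ 2 = (a:ℝ) * ((j+ρ)^2 + (j'+ρ)^2)
      → j ≤ 17 * L := by
    intro he
    rw [he, abs_mul] at h
    have haone : |(a:ℝ)| = 1 := by rcases ha with h1 | h1 <;> subst h1 <;> norm_num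
    rw [haone, one_mul, abs_of_nonneg (by positivity)] at h
    nlinarith [sq_nonneg (j' + ρ), hL, hjnn, hρnn,
      mul_le_mul_of_nonneg_left hL (show (0:ℝ) ≤ L by linarith)]
  rcases ha with ha1 | ha1 <;> rcases ha' with ha2 | ha2
  · exact same (ha1.trans ha2.symm)
  · exact opp (by subst ha1; subst ha2; push_cast; ring)
  · exact opp (by subst ha1; subst ha2; push_cast; ring)
  · exact same (ha1.trans ha2.symm)

/-- Localization of resonant indices for `SU(2)`: with `ρ = 1/√8`, `j, j' ∈ Λ₊ = ℕ/√8`,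
signs `a, a' ∈ {−1,1}` with `(j,a) ≠ (j',a')` and `L ≥ 1`, the inequality
`|a(j+ρ)² − a'(j'+ρ)²| ≤ 6L` forces `j ≤ 17L` and `j' ≤ 17L`. -/
theorem resonant_index_localization (ρ : ℝ) (hρ : ρ = 1 / Real.sqrt 8)
    (j j' : ℝ) (hj : ∃ m : ℕ, j = (m : ℝ) / Real.sqrt 8)
    (hj' : ∃ m : ℕ, j' = (m : ℝ) / Real.sqrt 8)
    (a a' : ℤ) (ha : a = -1 ∨ a = 1) (ha' : a' = -1 ∨ a' = 1)
    (hne : (j, a) ≠ (j', a'))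
    (L : ℝ) (hL : 1 ≤ L)
    (h : |(a : ℝ) * (j + ρ) ^ 2 - (a' : ℝ) * (j' + ρ) ^ 2| ≤ 6 * L) :
    j ≤ 17 * L ∧ j' ≤ 17 * L := by
  refine ⟨resonant_aux ρ hρ j j' hj hj' a a' ha ha' hne L hL h,
    resonant_aux ρ hρ j' j hj' hj a' a ha' ha (fun e => hne ?_) L hL ?_⟩
  · have e1 := congrArg Prod.fst e
    have e2 := congrArg Prod.snd e
    simp at e1 e2
    simp [e1, e2]
  · rwa [← abs_neg, neg_sub]
end

section
/- Let 𝔄 be a complex unital Banach algebra and let D, R, S, E, A ∈ 𝔄 satisfy the homological equation S + (AD − DA) = E. Then exp(A) (D + R) exp(−A) = D + E + R₁, where R₁ := (R − S) + Σ_{m=2}^∞ (1/m!) ad_A^{m−1}(E − S) + Σ_{m=1}^∞ (1/m!) ad_A^m(R), with ad_A(X) = AX − XA and both series absolutely convergent. -/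
open NormedSpace

/-- The adjoint action `ad_A(X) = AX − XA`. -/
def adAct {𝔄 : Type*} [Ring 𝔄] (A X : 𝔄) : 𝔄 := A * X - X * A

section Aux

variable {𝔄 : Type*} [NormedRing 𝔄] [NormedAlgebra ℂ 𝔄] [CompleteSpace 𝔄]

/-- Left multiplication as a ring hom into continuous linear maps. -/
noncomputable def lmulHom (𝔄 : Type*) [NormedRing 𝔄] [NormedAlgebra ℂ 𝔄] : 𝔄 →+* (𝔄 →L[ℂ] 𝔄) where
  toFun := ContinuousLinearMap.mul ℂ 𝔄
  map_one' := by ext x; simp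
  map_mul' a b := by ext x; simp [mul_assoc]
  map_zero' := by ext x; simp
  map_add' a b := by ext x; simp [add_mul]

/-- Right multiplication as a ring hom from the opposite algebra. -/
noncomputable def rmulHom (𝔄 : Type*) [NormedRing 𝔄] [NormedAlgebra ℂ 𝔄] : 𝔄ᵐᵒᵖ →+* (𝔄 →L[ℂ] 𝔄) where
  toFun a := (ContinuousLinearMap.mul ℂ 𝔄).flip a.unop
  map_one' := by ext x; simp
  map_mul' a b := by ext x; simp [mul_assoc]
  map_zero' := by ext x; simp
  map_add' a b := by ext x; simp [mul_add]

lemma adAct_op_pow_apply (A : 𝔄) (n : ℕ) (X : 𝔄) :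
    ((ContinuousLinearMap.mul ℂ 𝔄 A + (ContinuousLinearMap.mul ℂ 𝔄).flip (-A)) ^ n) X
      = (adAct A)^[n] X := by
  induction n generalizing X with
  | zero => simp
  | succ n ih =>
    rw [pow_succ, ContinuousLinearMap.mul_apply, Function.iterate_succ_apply, ← ih]
    congr 1
    simp [adAct, sub_eq_add_neg]

lemma conj_exp_eq (A X : 𝔄) :
    exp A * X * exp (-A) = ∑' n : ℕ, ((n.factorial : ℂ))⁻¹ • (adAct A)^[n] X := by
  letI : NormedAlgebra ℚ 𝔄 := .restrictScalars ℚ ℂ 𝔄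
  letI : NormedAlgebra ℚ (𝔄 →L[ℂ] 𝔄) := .restrictScalars ℚ ℂ (𝔄 →L[ℂ] 𝔄)
  set L : 𝔄 →L[ℂ] 𝔄 := ContinuousLinearMap.mul ℂ 𝔄 A with hLdef
  set Rm : 𝔄 →L[ℂ] 𝔄 := (ContinuousLinearMap.mul ℂ 𝔄).flip (-A) with hRdef
  have hcomm : Commute L Rm := by
    refine ContinuousLinearMap.ext fun x => ?_
    simp [hLdef, hRdef, ContinuousLinearMap.mul_apply, mul_assoc]
  have hL : exp L = ContinuousLinearMap.mul ℂ 𝔄 (exp A) := by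
    have := map_exp (lmulHom 𝔄) (ContinuousLinearMap.mul ℂ 𝔄).continuous A
    exact this.symm
  have hR : exp Rm = (ContinuousLinearMap.mul ℂ 𝔄).flip (exp (-A)) := by
    have hcont : Continuous (rmulHom 𝔄) :=
      (ContinuousLinearMap.mul ℂ 𝔄).flip.continuous.comp MulOpposite.continuous_unop
    have := map_exp (rmulHom 𝔄) hcont (MulOpposite.op (-A))
    rw [exp_op] at this
    exact this.symm
  have hadd : exp (L + Rm) = exp L * exp Rm := exp_add_of_commute hcomm
  have h1 : exp A * X * exp (-A) = exp (L + Rm) X := by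
    rw [hadd, ContinuousLinearMap.mul_apply, hL, hR]
    simp [mul_assoc]
  rw [h1, exp_eq_tsum ℂ]
  have hs : Summable fun n : ℕ => ((n.factorial : ℂ))⁻¹ • (L + Rm) ^ n :=
    expSeries_summable' (𝕂 := ℂ) (L + Rm)
  have h2 := (ContinuousLinearMap.apply ℂ 𝔄 X).map_tsum hs
  rw [ContinuousLinearMap.apply_apply] at h2
  rw [h2]
  refine tsum_congr fun n => ?_
  rw [ContinuousLinearMap.apply_apply, ContinuousLinearMap.smul_apply,
    adAct_op_pow_apply]

lemma adAct_iter_norm_le (A X : 𝔄) (n : ℕ) :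
    ‖(adAct A)^[n] X‖ ≤ (2 * ‖A‖) ^ n * ‖X‖ := by
  induction n with
  | zero => simp
  | succ n ih =>
    rw [Function.iterate_succ_apply']
    calc ‖adAct A ((adAct A)^[n] X)‖
        ≤ 2 * ‖A‖ * ‖(adAct A)^[n] X‖ := by
          rw [adAct]
          refine (norm_sub_le _ _).trans ?_
          have h1 := norm_mul_le A ((adAct A)^[n] X)
          have h2 := norm_mul_le ((adAct A)^[n] X) A
          nlinarith [norm_nonneg A, norm_nonneg ((adAct A)^[n] X)]
      _ ≤ 2 * ‖A‖ * ((2 * ‖A‖) ^ n * ‖X‖) := by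
          have h0 : (0:ℝ) ≤ 2 * ‖A‖ := by positivity
          exact mul_le_mul_of_nonneg_left ih h0
      _ = (2 * ‖A‖) ^ (n + 1) * ‖X‖ := by ring

lemma summable_ad_aux (A X : 𝔄) (k : ℕ) (hk : 1 ≤ k) :
    Summable (fun m : ℕ => (((m + k).factorial : ℝ))⁻¹ * ‖(adAct A)^[m + 1] X‖) := by
  have hbig : Summable (fun m : ℕ =>
      (2 * ‖A‖) ^ (m + 1) / ((m + 1).factorial : ℝ) * ‖X‖) := by
    have h := Real.summable_pow_div_factorial (2 * ‖A‖)
    exact (((summable_nat_add_iff 1).2 h)).mul_right _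
  refine Summable.of_nonneg_of_le (fun m => by positivity) (fun m => ?_) hbig
  have hf : ((m + 1).factorial : ℝ) ≤ ((m + k).factorial : ℝ) := by
    exact_mod_cast Nat.factorial_le (by omega)
  have hfpos : (0:ℝ) < ((m + 1).factorial : ℝ) := by positivity
  have hinv : (((m + k).factorial : ℝ))⁻¹ ≤ (((m + 1).factorial : ℝ))⁻¹ :=
    inv_anti₀ hfpos hf
  calc (((m + k).factorial : ℝ))⁻¹ * ‖(adAct A)^[m + 1] X‖
      ≤ (((m + 1).factorial : ℝ))⁻¹ * ((2 * ‖A‖) ^ (m + 1) * ‖X‖) := by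
        refine mul_le_mul hinv (adAct_iter_norm_le A X (m + 1)) (norm_nonneg _) ?_
        positivity
    _ = (2 * ‖A‖) ^ (m + 1) / ((m + 1).factorial : ℝ) * ‖X‖ := by ring

lemma summable_series (A X : 𝔄) :
    Summable (fun n : ℕ => ((n.factorial : ℂ))⁻¹ • (adAct A)^[n] X) := by
  refine Summable.of_norm ?_
  have hbig : Summable (fun n : ℕ =>
      (2 * ‖A‖) ^ n / (n.factorial : ℝ) * ‖X‖) :=
    (Real.summable_pow_div_factorial (2 * ‖A‖)).mul_right _
  refine Summable.of_nonneg_of_le (fun n => norm_nonneg _) (fun n => ?_) hbig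
  rw [norm_smul]
  have h1 : ‖((n.factorial : ℂ))⁻¹‖ = ((n.factorial : ℝ))⁻¹ := by
    rw [norm_inv, Complex.norm_natCast]
  rw [h1]
  have hfpos : (0:ℝ) < ((n.factorial : ℝ)) := by positivity
  calc ((n.factorial : ℝ))⁻¹ * ‖(adAct A)^[n] X‖
      ≤ ((n.factorial : ℝ))⁻¹ * ((2 * ‖A‖) ^ n * ‖X‖) := by
        exact mul_le_mul_of_nonneg_left (adAct_iter_norm_le A X n) (by positivity)
    _ = (2 * ‖A‖) ^ n / (n.factorial : ℝ) * ‖X‖ := by ring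

end Aux

/-- The KAM conjugation identity: if `S + (AD − DA) = E` in a complex unital Banach
algebra, then `exp(A)(D + R)exp(−A) = D + E + R₁` with
`R₁ = (R − S) + Σ_{m≥2} (1/m!) ad_A^{m−1}(E − S) + Σ_{m≥1} (1/m!) ad_A^m(R)`,
both series being absolutely convergent. -/
theorem kam_step_conjugation (𝔄 : Type*) [NormedRing 𝔄] [NormedAlgebra ℂ 𝔄]
    [CompleteSpace 𝔄] (D R S E A : 𝔄)
    (hhom : S + (A * D - D * A) = E) :
    Summable (fun m : ℕ => (((m + 2).factorial : ℝ))⁻¹ * ‖(adAct A)^[m + 1] (E - S)‖) ∧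
    Summable (fun m : ℕ => (((m + 1).factorial : ℝ))⁻¹ * ‖(adAct A)^[m + 1] R‖) ∧
    exp A * (D + R) * exp (-A) =
      D + E + ((R - S)
        + ∑' m : ℕ, (((m + 2).factorial : ℂ))⁻¹ • (adAct A)^[m + 1] (E - S)
        + ∑' m : ℕ, (((m + 1).factorial : ℂ))⁻¹ • (adAct A)^[m + 1] R) := by
  refine ⟨summable_ad_aux A (E - S) 2 (by norm_num),
         summable_ad_aux A R 1 le_rfl, ?_⟩
  have hAD : adAct A D = E - S := by
    simp only [adAct, ← hhom]; abel
  -- expand the conjugation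
  have hsplit : exp A * (D + R) * exp (-A)
      = exp A * D * exp (-A) + exp A * R * exp (-A) := by
    rw [mul_add, add_mul]
  rw [hsplit, conj_exp_eq A D, conj_exp_eq A R]
  -- the D series
  have hsD : Summable (fun n : ℕ => ((n.factorial : ℂ))⁻¹ • (adAct A)^[n] D) :=
    summable_series A D
  have hsD1 : Summable (fun n : ℕ => (((n + 1).factorial : ℂ))⁻¹ • (adAct A)^[n + 1] D) :=
    (summable_nat_add_iff 1).2 hsD
  have hD : (∑' n : ℕ, ((n.factorial : ℂ))⁻¹ • (adAct A)^[n] D)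
      = D + (E - S) + ∑' m : ℕ, (((m + 2).factorial : ℂ))⁻¹ • (adAct A)^[m + 1] (E - S) := by
    rw [Summable.tsum_eq_zero_add hsD, Summable.tsum_eq_zero_add hsD1]
    have h0 : (((0 : ℕ).factorial : ℂ))⁻¹ • (adAct A)^[0] D = D := by simp
    have h1 : (((0 + 1 : ℕ).factorial : ℂ))⁻¹ • (adAct A)^[0 + 1] D = E - S := by
      simp [hAD]
    rw [h0, h1, ← add_assoc]
    congr 1
    refine tsum_congr fun m => ?_
    show (((m + 2).factorial : ℂ))⁻¹ • (adAct A)^[m + 2] D = _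
    rw [Function.iterate_succ_apply, hAD]
  -- the R series
  have hsR : Summable (fun n : ℕ => ((n.factorial : ℂ))⁻¹ • (adAct A)^[n] R) :=
    summable_series A R
  have hReq : (∑' n : ℕ, ((n.factorial : ℂ))⁻¹ • (adAct A)^[n] R)
      = R + ∑' m : ℕ, (((m + 1).factorial : ℂ))⁻¹ • (adAct A)^[m + 1] R := by
    rw [Summable.tsum_eq_zero_add hsR]
    simp
  rw [hD, hReq]
  abel
end

section
/- Let d ≥ 1 and fix s₀ > (d+1)/2. There exists a constant C(s₀), depending only on d and s₀, with the following property. Let T : K × K → ℂ (K = ℤ^d × ℤ × {−1,1}) be Töplitz in time, i.e. there exists T̂ such that T_{(l,j,a),(l',j',a')} = T̂(l−l')_{(j,a),(j',a')} for all indices. Suppose s ≥ 0 and |T|_{s+s₀} < ∞. Then for every φ ∈ ℝ^d the sums T(φ)_{(j,a),(j',a')} := Σ_{l∈ℤ^d} T̂(l)_{(j,a),(j',a')} e^{i l·φ} converge absolutely and define a matrix T(φ) on (ℤ × {−1,1}) × (ℤ × {−1,1}) satisfying sup_{φ∈ℝ^d} |T(φ)|_s ≤ C(s₀) |T|_{s+s₀},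 where on the left |·|_s is the s-decay norm for matrices indexed by ℤ × {−1,1} and on the right |·|_{s+s₀} is the s-decay norm for matrices indexed by K. -/
open scoped Classical ENNReal NNReal

/-- The phase-space index set `ℤ × {−1,1}`. -/
abbrev PIdx : Type := ℤ × Sgn

noncomputable section

/-- `|j|` on `ℤ`, size function for the phase-space indices. -/
def szZ (j : ℤ) : ℕ := j.natAbs

end

section AuxLemmas

/-- Cauchy–Schwarz for `ℝ≥0∞`-valued tsums. -/
lemma tsum_mul_le_sqrt_mul_sqrt {ι : Type*} [Countable ι] (f g : ι → ℝ≥0∞) :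
    ∑' i, f i * g i ≤
      (∑' i, f i ^ (2:ℝ)) ^ (1/2:ℝ) * (∑' i, g i ^ (2:ℝ)) ^ (1/2:ℝ) := by
  letI : MeasurableSpace ι := ⊤
  haveI : MeasurableSingletonClass ι := ⟨fun _ => trivial⟩
  have hf : AEMeasurable f (MeasureTheory.Measure.count) := (Measurable.of_comap_le le_top).aemeasurable
  have hg : AEMeasurable g (MeasureTheory.Measure.count) := (Measurable.of_comap_le le_top).aemeasurable
  have := ENNReal.lintegral_mul_le_Lp_mul_Lq (MeasureTheory.Measure.count (α := ι))
    Real.HolderConjugate.two_two hf hg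
  simpa [MeasureTheory.lintegral_count] using this

/-- norm of tsum is at most the `ℝ≥0∞` sum of norms. -/
lemma ennnorm_tsum_le {ι : Type*} (f : ι → ℂ) :
    (‖∑' i, f i‖₊ : ℝ≥0∞) ≤ ∑' i, (‖f i‖₊ : ℝ≥0∞) := by
  by_cases h : ∑' i, (‖f i‖₊ : ℝ≥0∞) = ⊤
  · simp [h]
  · have hs : Summable fun i => ‖f i‖₊ := ENNReal.tsum_coe_ne_top_iff_summable.mp h
    rw [← ENNReal.coe_tsum hs]
    exact_mod_cast nnnorm_tsum_le hs

/-- antitonicity of rpow in the base, for nonpositive exponents. -/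
lemma rpow_le_rpow_of_nonpos' {x y : ℝ≥0∞} (hx : x ≠ 0) (hyt : y ≠ ⊤) (hxy : x ≤ y)
    {z : ℝ} (hz : z ≤ 0) : y ^ z ≤ x ^ z := by
  have hxt : x ≠ ⊤ := fun h => hyt (top_le_iff.mp (h ▸ hxy))
  lift x to ℝ≥0 using hxt
  lift y to ℝ≥0 using hyt
  have hx0 : x ≠ 0 := by exact_mod_cast hx
  have hy0 : y ≠ 0 := fun h => hx0 (le_antisymm (by exact_mod_cast h ▸ hxy) zero_le)
  rw [← ENNReal.coe_rpow_of_ne_zero hx0, ← ENNReal.coe_rpow_of_ne_zero hy0]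
  exact_mod_cast NNReal.rpow_le_rpow_of_nonpos (pos_iff_ne_zero.mpr hx0) (by exact_mod_cast hxy) hz


lemma sum1d {t : ℝ} (ht : 1 < t) :
    ∑' k : ℤ, ((max 1 k.natAbs : ℕ) : ℝ≥0∞) ^ (-t) ≠ ⊤ := by
  have hnat : Summable fun n : ℕ => ((max 1 n : ℕ) : ℝ) ^ (-t) := by
    have h0 : Summable fun n : ℕ => ((n : ℝ)) ^ (-t) :=
      Real.summable_nat_rpow.mpr (by linarith)
    have h1 := (summable_nat_add_iff (f := fun n : ℕ => ((n : ℝ)) ^ (-t)) 1).mpr h0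
    refine (summable_nat_add_iff 1).mp ?_
    refine h1.congr fun n => ?_
    simp [Nat.max_eq_right (Nat.one_le_iff_ne_zero.mpr (Nat.succ_ne_zero n))]
  have hint : Summable fun k : ℤ => ((max 1 k.natAbs : ℕ) : ℝ) ^ (-t) := by
    refine Summable.of_nat_of_neg ?_ ?_ <;> simpa using hnat
  have hnn : Summable fun k : ℤ => ((max 1 k.natAbs : ℕ) : ℝ≥0) ^ (-t) := by
    rw [← NNReal.summable_coe]
    refine hint.congr fun k => ?_
    rw [NNReal.coe_rpow, NNReal.coe_natCast]
  rw [← ENNReal.tsum_coe_ne_top_iff_summable] at hnn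
  refine fun h => hnn ?_
  rw [← h]
  refine tsum_congr fun k => ?_
  rw [ENNReal.coe_rpow_of_ne_zero (by positivity), ENNReal.coe_natCast]

lemma tsum_pi_prod : ∀ (d : ℕ) (g : ℤ → ℝ≥0∞),
    ∑' l : Fin d → ℤ, ∏ p, g (l p) = (∑' k : ℤ, g k) ^ d := by
  intro d
  induction d with
  | zero => intro g; simp [tsum_eq_sum (s := Finset.univ) (fun b hb => absurd (Finset.mem_univ b) hb)]
  | succ n ih =>
    intro g
    have he : ∑' l : Fin (n+1) → ℤ, ∏ p, g (l p)
        = ∑' q : ℤ × (Fin n → ℤ), ∏ p, g ((Fin.cons q.1 q.2 : Fin (n+1) → ℤ) p) := by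
      rw [← ((Fin.consEquiv (fun _ : Fin (n+1) => ℤ)).tsum_eq (fun l => ∏ p, g (l p)))]
      rfl
    rw [he]
    have : ∀ q : ℤ × (Fin n → ℤ), ∏ p, g ((Fin.cons q.1 q.2 : Fin (n+1) → ℤ) p)
        = g q.1 * ∏ p : Fin n, g (q.2 p) := by
      intro q
      rw [Fin.prod_univ_succ]
      simp
    rw [tsum_congr this,
      ENNReal.tsum_prod (f := fun a (b : Fin n → ℤ) => g a * ∏ p : Fin n, g (b p))]
    simp_rw [ENNReal.tsum_mul_left]
    rw [ENNReal.tsum_mul_right, ih g, pow_succ, mul_comm]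

lemma Kfin (d : ℕ) (hd : 1 ≤ d) {t : ℝ} (ht : (d : ℝ) < t) :
    ∑' l : Fin d → ℤ, ((max 1 (Finset.univ.sup fun p => (l p).natAbs) : ℕ) : ℝ≥0∞) ^ (-t) ≠ ⊤ := by
  have hd0 : (d : ℝ) ≠ 0 := Nat.cast_ne_zero.mpr (by omega)
  have htd : 1 < t / d := (one_lt_div (by positivity)).mpr ht
  have htd0 : -(t / d) ≤ 0 := neg_nonpos.mpr (by linarith)
  have key : ∀ l : Fin d → ℤ,
      ((max 1 (Finset.univ.sup fun p => (l p).natAbs) : ℕ) : ℝ≥0∞) ^ (-t)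
        ≤ ∏ p, ((max 1 (l p).natAbs : ℕ) : ℝ≥0∞) ^ (-(t / d)) := by
    intro l
    set M : ℝ≥0∞ := ((max 1 (Finset.univ.sup fun p => (l p).natAbs) : ℕ) : ℝ≥0∞) with hM
    have hMt : M ≠ ⊤ := ENNReal.natCast_ne_top _
    have hprod_ne_zero : (∏ p, ((max 1 (l p).natAbs : ℕ) : ℝ≥0∞)) ≠ 0 :=
      Finset.prod_ne_zero_iff.mpr fun p _ => Nat.cast_ne_zero.mpr (by omega)
    have hple : ∀ p : Fin d, ((max 1 (l p).natAbs : ℕ) : ℝ≥0∞) ≤ M := by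
      intro p
      refine Nat.cast_le.mpr (max_le_max le_rfl ?_)
      exact Finset.le_sup (f := fun p => (l p).natAbs) (Finset.mem_univ p)
    have hprod_le : (∏ p, ((max 1 (l p).natAbs : ℕ) : ℝ≥0∞)) ≤ M ^ d := by
      refine le_trans (Finset.prod_le_pow_card _ _ M fun p _ => hple p) ?_
      simp
    have hMd : M ^ (-t) = (M ^ d) ^ (-(t / d)) := by
      rw [← ENNReal.rpow_natCast M d, ← ENNReal.rpow_mul]
      congr 1
      field_simp
    rw [hMd, ENNReal.prod_rpow_of_ne_top (f := fun p : Fin d => ((max 1 (l p).natAbs : ℕ) : ℝ≥0∞)) (fun p _ => ENNReal.natCast_ne_top _)]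
    exact rpow_le_rpow_of_nonpos' hprod_ne_zero
      (by exact ENNReal.pow_ne_top hMt) hprod_le htd0
  refine fun h => ?_
  have h2 : (∑' l : Fin d → ℤ, ∏ p, ((max 1 (l p).natAbs : ℕ) : ℝ≥0∞) ^ (-(t / d))) = ⊤ :=
    top_le_iff.mp (h ▸ ENNReal.tsum_le_tsum key)
  rw [tsum_pi_prod d (fun k => ((max 1 k.natAbs : ℕ) : ℝ≥0∞) ^ (-(t / d)))] at h2
  exact ENNReal.pow_ne_top (sum1d htd) h2


lemma apply_nnnorm_le (A : EuclideanSpace ℂ Sgn →L[ℂ] EuclideanSpace ℂ Sgn)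
    (x : EuclideanSpace ℂ Sgn) (a : Sgn) : ‖A x a‖₊ ≤ ‖A x‖₊ := by
  rw [EuclideanSpace.nnnorm_eq]
  refine le_trans ?_ (NNReal.sqrt_le_sqrt.mpr (Finset.single_le_sum (f := fun i => ‖A x i‖₊ ^ 2)
    (fun _ _ => zero_le) (Finset.mem_univ a)))
  rw [NNReal.sqrt_sq]

lemma entry_le_opNorm0 (m : Matrix Sgn Sgn ℂ) (a a' : Sgn) :
    (‖m a a'‖₊ : ℝ≥0∞) ≤ opNorm0 m := by
  set A := Matrix.toEuclideanCLM (𝕜 := ℂ) m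
  have hx : A ((WithLp.equiv 2 _).symm (Pi.single a' 1)) =
      (WithLp.equiv 2 _).symm (m.mulVec (Pi.single a' 1)) := by
    rw [WithLp.equiv_symm_apply]
    rfl
  have h1 : m a a' = A ((WithLp.equiv 2 _).symm (Pi.single a' 1)) a := by
    rw [hx]
    simp [Matrix.mulVec_single]
  rw [h1]
  calc (‖A ((WithLp.equiv 2 _).symm (Pi.single a' 1)) a‖₊ : ℝ≥0∞)
      ≤ (‖A ((WithLp.equiv 2 _).symm (Pi.single a' 1))‖₊ : ℝ≥0∞) := by
        exact_mod_cast apply_nnnorm_le A _ a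
    _ ≤ (‖A‖₊ * ‖(WithLp.equiv 2 (Sgn → ℂ)).symm (Pi.single a' 1)‖₊ : ℝ≥0∞) := by
        exact_mod_cast A.le_opNNNorm _
    _ ≤ opNorm0 m := by
        have h2 : ‖(WithLp.equiv 2 (Sgn → ℂ)).symm (Pi.single a' 1)‖₊ = 1 := by
          have := EuclideanSpace.nnnorm_single (𝕜 := ℂ) (ι := Sgn) a' (1 : ℂ)
          rw [show EuclideanSpace.single a' (1:ℂ) = (WithLp.equiv 2 (Sgn → ℂ)).symm (Pi.single a' 1) from rfl] at this
          rw [this, nnnorm_one]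
        rw [h2, ENNReal.coe_one, mul_one]
        exact le_rfl

lemma apply_nnnorm_le' (x : EuclideanSpace ℂ Sgn) (a : Sgn) : ‖x a‖₊ ≤ ‖x‖₊ := by
  rw [EuclideanSpace.nnnorm_eq]
  refine le_trans ?_ (NNReal.sqrt_le_sqrt.mpr (Finset.single_le_sum (f := fun i => ‖x i‖₊ ^ 2)
    (fun _ _ => zero_le) (Finset.mem_univ a)))
  rw [NNReal.sqrt_sq]

lemma sqrt_sum_sq_le_sum (u : Sgn → ℝ≥0) :
    NNReal.sqrt (∑ a, u a ^ 2) ≤ ∑ a, u a := by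
  rw [NNReal.sqrt_le_iff_le_sq, sq, Finset.sum_mul]
  refine Finset.sum_le_sum fun a _ => ?_
  rw [sq]
  exact mul_le_mul_right (Finset.single_le_sum (f := fun i => u i) (fun _ _ => zero_le)
    (Finset.mem_univ a)) _

lemma opNorm0_le_sum (m : Matrix Sgn Sgn ℂ) :
    opNorm0 m ≤ ∑ a : Sgn, ∑ a' : Sgn, (‖m a a'‖₊ : ℝ≥0∞) := by
  have key : ‖Matrix.toEuclideanCLM (𝕜 := ℂ) m‖₊ ≤ ∑ a : Sgn, ∑ a' : Sgn, ‖m a a'‖₊ := by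
    refine ContinuousLinearMap.opNNNorm_le_bound _ _ fun x => ?_
    set A := Matrix.toEuclideanCLM (𝕜 := ℂ) m
    have hAx : ∀ a, A x a = ∑ a', m a a' * x a' := by
      intro a
      have := Matrix.ofLp_toEuclideanCLM (𝕜 := ℂ) m x
      calc A x a = (WithLp.equiv 2 (Sgn → ℂ)) (A x) a := rfl
        _ = Matrix.toLin' m ((WithLp.equiv 2 (Sgn → ℂ)) x) a := by rw [WithLp.equiv_apply, this]; rfl
        _ = ∑ a', m a a' * x a' := by
            rw [Matrix.toLin'_apply]
            rfl
    calc ‖A x‖₊ = NNReal.sqrt (∑ a, ‖A x a‖₊ ^ 2) := EuclideanSpace.nnnorm_eq _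
      _ ≤ ∑ a, ‖A x a‖₊ := sqrt_sum_sq_le_sum _
      _ ≤ ∑ a : Sgn, (∑ a' : Sgn, ‖m a a'‖₊) * ‖x‖₊ := by
          refine Finset.sum_le_sum fun a _ => ?_
          rw [hAx a]
          refine le_trans (nnnorm_sum_le _ _) ?_
          rw [Finset.sum_mul]
          refine Finset.sum_le_sum fun a' _ => ?_
          rw [nnnorm_mul]
          exact mul_le_mul_right (apply_nnnorm_le' x a') _
      _ = (∑ a : Sgn, ∑ a' : Sgn, ‖m a a'‖₊) * ‖x‖₊ := by rw [Finset.sum_mul]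
  calc opNorm0 m = (‖Matrix.toEuclideanCLM (𝕜 := ℂ) m‖₊ : ℝ≥0∞) := rfl
    _ ≤ ((∑ a : Sgn, ∑ a' : Sgn, ‖m a a'‖₊ : ℝ≥0) : ℝ≥0∞) := by exact_mod_cast key
    _ = ∑ a : Sgn, ∑ a' : Sgn, (‖m a a'‖₊ : ℝ≥0∞) := by push_cast; rfl

end AuxLemmas

/-- For a Töplitz-in-time matrix `T` on `K = ℤ^d × ℤ × {−1,1}` with `|T|_{s+s₀} < ∞`,
the time-Fourier sums `T(φ) = Σ_l T̂(l) e^{i l·φ}` converge absolutely and define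
phase-space matrices satisfying `sup_φ |T(φ)|_s ≤ C(s₀) |T|_{s+s₀}`, where `C(s₀)`
depends only on `d` and `s₀`. -/
theorem toeplitz_phase_space_norm (d : ℕ) (hd : 1 ≤ d) (s₀ : ℝ)
    (hs₀ : ((d : ℝ) + 1) / 2 < s₀) :
    ∃ C : ℝ≥0, ∀ (T : KIdx d → KIdx d → ℂ) (Th : (Fin d → ℤ) → PIdx → PIdx → ℂ),
      (∀ (l l' : Fin d → ℤ) (j j' : ℤ) (a a' : Sgn),
        T ((l, j), a) ((l', j'), a') = Th (l - l') (j, a) (j', a')) →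
      ∀ s : ℝ, 0 ≤ s → dnorm (szI d) (s + s₀) T ≠ ⊤ →
        (∀ (φ : Fin d → ℝ) (x y : PIdx),
          Summable fun l : Fin d → ℤ =>
            Th l x y * Complex.exp (Complex.I * ∑ p, (l p : ℂ) * (φ p : ℂ))) ∧
        ∀ φ : Fin d → ℝ,
          dnorm szZ s (fun x y => ∑' l : Fin d → ℤ,
              Th l x y * Complex.exp (Complex.I * ∑ p, (l p : ℂ) * (φ p : ℂ))) ≤
            (C : ℝ≥0∞) * dnorm (szI d) (s + s₀) T := by
  classical
  have hs₀pos : 0 < s₀ := lt_of_le_of_lt (by positivity) hs₀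
  set K : ℝ≥0∞ := ∑' l : Fin d → ℤ,
      ((max 1 (Finset.univ.sup fun p => (l p).natAbs) : ℕ) : ℝ≥0∞) ^ (-(2 * s₀)) with hKdef
  have hK : K ≠ ⊤ := by
    refine Kfin d hd ?_
    have : (1:ℝ) ≤ d := by exact_mod_cast hd
    linarith
  have hCne : ((16 * K) ^ (1/2:ℝ)) ≠ ⊤ :=
    ENNReal.rpow_ne_top_of_nonneg (by norm_num)
      (ENNReal.mul_ne_top (by norm_num) hK)
  refine ⟨((16 * K) ^ (1/2:ℝ)).toNNReal, ?_⟩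
  intro T Th hT s hs hfin
  -- the exponential factor has norm 1
  have hexp : ∀ (φ : Fin d → ℝ) (l : Fin d → ℤ),
      ‖Complex.exp (Complex.I * ∑ p, (l p : ℂ) * (φ p : ℂ))‖₊ = 1 := by
    intro φ l
    have hz : (∑ p, (l p : ℂ) * (φ p : ℂ)) = (((∑ p, (l p : ℝ) * φ p) : ℝ) : ℂ) := by
      push_cast
      rfl
    have hn : ‖Complex.exp (Complex.I * ∑ p, (l p : ℂ) * (φ p : ℂ))‖ = 1 := by
      rw [Complex.norm_exp, hz]
      simp [Complex.mul_re]
    exact NNReal.coe_injective (by simpa using hn)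
  -- blocks of `Th l` are dominated by `blockSup T`
  have hblk : ∀ (l : Fin d → ℤ) (j j' : ℤ),
      opNorm0 (blk (Th l) j j') ≤ blockSup T (l, j - j') := by
    intro l j j'
    have hsub : ((l, j) : (Fin d → ℤ) × ℤ) - (l, j - j') = (0, j') := by
      rw [Prod.mk_sub_mk, sub_self, sub_sub_cancel]
    have heq : blk (Th l) j j' =
        blk T ((l, j) : (Fin d → ℤ) × ℤ) ((l, j) - (l, j - j')) := by
      funext a a'
      rw [hsub]
      show Th l (j, a) (j', a') = T ((l, j), a) ((0, j'), a')
      rw [hT l 0 j j', sub_zero]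
    rw [heq]
    simp only [blockSup]
    exact le_iSup (fun h : (Fin d → ℤ) × ℤ => opNorm0 (blk T h (h - (l, j - j')))) (l, j)
  set D : ℝ≥0∞ := ∑' i : (Fin d → ℤ) × ℤ,
      ((ang (szI d) i : ℕ) : ℝ≥0∞) ^ (2 * (s + s₀)) * blockSup T i ^ 2 with hDdef
  have hdT : dnorm (szI d) (s + s₀) T = D ^ (1/2:ℝ) := rfl
  have hD : D ≠ ⊤ := by
    intro h
    exact hfin (by rw [hdT, h, ENNReal.top_rpow_of_pos (by norm_num)])
  set F : ℤ → ℝ≥0∞ := fun m => ∑' l : Fin d → ℤ,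
      ((ang (szI d) (l, m) : ℕ) : ℝ≥0∞) ^ (2 * (s + s₀)) * blockSup T (l, m) ^ 2 with hFdef
  have hDsum : D = ∑' m : ℤ, F m := by
    rw [hDdef,
      ENNReal.tsum_prod (f := fun (l : Fin d → ℤ) (m : ℤ) =>
        ((ang (szI d) (l, m) : ℕ) : ℝ≥0∞) ^ (2 * (s + s₀)) * blockSup T (l, m) ^ 2),
      ENNReal.tsum_comm]
  have hFD : ∀ m, F m ≤ D := by
    intro m
    rw [hDsum]
    exact ENNReal.le_tsum m
  have hang_le : ∀ (l : Fin d → ℤ) (m : ℤ), ang szZ m ≤ ang (szI d) (l, m) := by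
    intro l m
    simp only [ang, szZ, szI]
    exact max_le_max le_rfl (le_max_right _ _)
  have hangI_ne0 : ∀ i : (Fin d → ℤ) × ℤ, ((ang (szI d) i : ℕ) : ℝ≥0∞) ≠ 0 := by
    intro i
    simp only [ang]
    exact Nat.cast_ne_zero.mpr (by omega)
  -- Cauchy–Schwarz step
  have hCS : ∀ m : ℤ, ((ang szZ m : ℕ) : ℝ≥0∞) ^ s * (∑' l : Fin d → ℤ, blockSup T (l, m))
      ≤ (F m) ^ (1/2:ℝ) * K ^ (1/2:ℝ) := by
    intro m
    set a : (Fin d → ℤ) → ℝ≥0∞ := fun l =>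
      ((ang (szI d) (l, m) : ℕ) : ℝ≥0∞) ^ (s + s₀) * blockSup T (l, m) with hadef
    set b : (Fin d → ℤ) → ℝ≥0∞ := fun l =>
      ((ang (szI d) (l, m) : ℕ) : ℝ≥0∞) ^ (-s₀) with hbdef
    have h1 : ((ang szZ m : ℕ) : ℝ≥0∞) ^ s * (∑' l : Fin d → ℤ, blockSup T (l, m))
        ≤ ∑' l, a l * b l := by
      rw [← ENNReal.tsum_mul_left]
      refine ENNReal.tsum_le_tsum fun l => ?_
      have hab : a l * b l = ((ang (szI d) (l, m) : ℕ) : ℝ≥0∞) ^ s * blockSup T (l, m) := by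
        rw [hadef, hbdef]
        show (((ang (szI d) (l, m) : ℕ) : ℝ≥0∞) ^ (s + s₀) * blockSup T (l, m)) *
            ((ang (szI d) (l, m) : ℕ) : ℝ≥0∞) ^ (-s₀) = _
        rw [mul_right_comm, ← ENNReal.rpow_add _ _ (hangI_ne0 (l, m)) (ENNReal.natCast_ne_top _),
          add_neg_cancel_right]
      rw [hab]
      exact mul_le_mul_left (ENNReal.rpow_le_rpow (Nat.cast_le.mpr (hang_le l m)) hs) _
    refine le_trans h1 (le_trans (tsum_mul_le_sqrt_mul_sqrt a b) ?_)
    have ha2 : ∑' l, a l ^ (2:ℝ) = F m := by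
      refine tsum_congr fun l => ?_
      rw [hadef]
      show ((((ang (szI d) (l, m) : ℕ) : ℝ≥0∞) ^ (s + s₀) * blockSup T (l, m)) : ℝ≥0∞) ^ (2:ℝ) = _
      rw [ENNReal.mul_rpow_of_nonneg _ _ (by norm_num : (0:ℝ) ≤ 2), ← ENNReal.rpow_mul]
      congr 1
      · congr 1
        ring
      · rw [← ENNReal.rpow_natCast (blockSup T (l, m)) 2]
        norm_num
    have hb2 : ∑' l, b l ^ (2:ℝ) ≤ K := by
      rw [hKdef]
      refine ENNReal.tsum_le_tsum fun l => ?_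
      rw [hbdef]
      show ((((ang (szI d) (l, m) : ℕ) : ℝ≥0∞) ^ (-s₀)) : ℝ≥0∞) ^ (2:ℝ) ≤ _
      rw [← ENNReal.rpow_mul]
      have he : -s₀ * 2 = -(2 * s₀) := by ring
      rw [he]
      refine rpow_le_rpow_of_nonpos' ?_ (ENNReal.natCast_ne_top _) ?_ (neg_nonpos.mpr (by linarith))
      · exact Nat.cast_ne_zero.mpr (by omega)
      · refine Nat.cast_le.mpr ?_
        simp only [ang, szI]
        exact max_le_max le_rfl (le_max_left _ _)
    rw [ha2]
    exact mul_le_mul_right (ENNReal.rpow_le_rpow hb2 (by norm_num)) _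
  -- block bound for the phase-space matrices
  have hbsφ : ∀ (φ : Fin d → ℝ) (m : ℤ),
      blockSup (fun x y : PIdx => ∑' l : Fin d → ℤ,
          Th l x y * Complex.exp (Complex.I * ∑ p, (l p : ℂ) * (φ p : ℂ))) m
        ≤ 4 * ∑' l : Fin d → ℤ, blockSup T (l, m) := by
    intro φ m
    refine iSup_le fun h => ?_
    refine le_trans (opNorm0_le_sum _) ?_
    have hentry : ∀ a a' : Sgn,
        (‖blk (fun x y : PIdx => ∑' l : Fin d → ℤ,
            Th l x y * Complex.exp (Complex.I * ∑ p, (l p : ℂ) * (φ p : ℂ))) h (h - m) a a'‖₊ : ℝ≥0∞)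
          ≤ ∑' l : Fin d → ℤ, blockSup T (l, m) := by
      intro a a'
      have hbe : blk (fun x y : PIdx => ∑' l : Fin d → ℤ,
            Th l x y * Complex.exp (Complex.I * ∑ p, (l p : ℂ) * (φ p : ℂ))) h (h - m) a a'
          = ∑' l : Fin d → ℤ, Th l (h, a) (h - m, a') *
              Complex.exp (Complex.I * ∑ p, (l p : ℂ) * (φ p : ℂ)) := rfl
      rw [hbe]
      refine le_trans (ennnorm_tsum_le _) (ENNReal.tsum_le_tsum fun l => ?_)
      rw [nnnorm_mul, hexp φ l, mul_one]
      refine le_trans (entry_le_opNorm0 (blk (Th l) h (h - m)) a a') ?_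
      have := hblk l h (h - m)
      rwa [sub_sub_cancel] at this
    refine le_trans (Finset.sum_le_sum fun a _ =>
      Finset.sum_le_sum fun a' _ => hentry a a') ?_
    rw [Finset.sum_const, Finset.sum_const, Finset.card_univ, Fintype.card_coe, smul_smul]
    have hcard : ({-1, 1} : Finset ℤ).card = 2 := by decide
    rw [hcard]
    rw [nsmul_eq_mul]
    norm_num
  -- the main estimate
  have main : ∀ φ : Fin d → ℝ,
      dnorm szZ s (fun x y => ∑' l : Fin d → ℤ,
          Th l x y * Complex.exp (Complex.I * ∑ p, (l p : ℂ) * (φ p : ℂ)))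
        ≤ ((16 * K) ^ (1/2:ℝ)) * dnorm (szI d) (s + s₀) T := by
    intro φ
    set Tφ : PIdx → PIdx → ℂ := fun x y => ∑' l : Fin d → ℤ,
        Th l x y * Complex.exp (Complex.I * ∑ p, (l p : ℂ) * (φ p : ℂ)) with hTφ
    have hterm : ∀ m : ℤ,
        ((ang szZ m : ℕ) : ℝ≥0∞) ^ (2 * s) * blockSup Tφ m ^ 2 ≤ 16 * K * F m := by
      intro m
      have h1 : ((ang szZ m : ℕ) : ℝ≥0∞) ^ (2 * s) * blockSup Tφ m ^ 2
          = (((ang szZ m : ℕ) : ℝ≥0∞) ^ s * blockSup Tφ m) ^ 2 := by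
        rw [mul_pow, ← ENNReal.rpow_natCast (((ang szZ m : ℕ) : ℝ≥0∞) ^ s) 2,
          ← ENNReal.rpow_mul]
        norm_num [mul_comm]
      rw [h1]
      have h2 : ((ang szZ m : ℕ) : ℝ≥0∞) ^ s * blockSup Tφ m
          ≤ 4 * ((F m) ^ (1/2:ℝ) * K ^ (1/2:ℝ)) :=
        calc ((ang szZ m : ℕ) : ℝ≥0∞) ^ s * blockSup Tφ m
            ≤ ((ang szZ m : ℕ) : ℝ≥0∞) ^ s * (4 * ∑' l : Fin d → ℤ, blockSup T (l, m)) :=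
              mul_le_mul_right (hbsφ φ m) _
          _ = 4 * (((ang szZ m : ℕ) : ℝ≥0∞) ^ s * ∑' l : Fin d → ℤ, blockSup T (l, m)) := by
              ring
          _ ≤ 4 * ((F m) ^ (1/2:ℝ) * K ^ (1/2:ℝ)) := mul_le_mul_right (hCS m) _
      calc (((ang szZ m : ℕ) : ℝ≥0∞) ^ s * blockSup Tφ m) ^ 2
          ≤ (4 * ((F m) ^ (1/2:ℝ) * K ^ (1/2:ℝ))) ^ 2 := pow_le_pow_left' h2 2
        _ = 16 * K * F m := by
            rw [mul_pow, mul_pow, ← ENNReal.rpow_natCast ((F m) ^ (1/2:ℝ)) 2,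
              ← ENNReal.rpow_natCast (K ^ (1/2:ℝ)) 2, ← ENNReal.rpow_mul, ← ENNReal.rpow_mul]
            norm_num
            ring
    have hsum : ∑' m : ℤ, ((ang szZ m : ℕ) : ℝ≥0∞) ^ (2 * s) * blockSup Tφ m ^ 2
        ≤ 16 * K * D := by
      refine le_trans (ENNReal.tsum_le_tsum hterm) ?_
      rw [ENNReal.tsum_mul_left, hDsum]
    calc dnorm szZ s Tφ
        = (∑' m : ℤ, ((ang szZ m : ℕ) : ℝ≥0∞) ^ (2 * s) * blockSup Tφ m ^ 2) ^ (1/2:ℝ) := rfl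
      _ ≤ (16 * K * D) ^ (1/2:ℝ) := ENNReal.rpow_le_rpow hsum (by norm_num)
      _ = (16 * K) ^ (1/2:ℝ) * D ^ (1/2:ℝ) := ENNReal.mul_rpow_of_nonneg _ _ (by norm_num)
      _ = (16 * K) ^ (1/2:ℝ) * dnorm (szI d) (s + s₀) T := by rw [hdT]
  constructor
  · -- summability
    intro φ x y
    obtain ⟨j, a⟩ := x
    obtain ⟨j', a'⟩ := y
    have hbound : ∑' l : Fin d → ℤ, ((‖Th l (j, a) (j', a') *
        Complex.exp (Complex.I * ∑ p, (l p : ℂ) * (φ p : ℂ))‖₊ : ℝ≥0) : ℝ≥0∞) ≠ ⊤ := by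
      have hle : ∑' l : Fin d → ℤ, ((‖Th l (j, a) (j', a') *
          Complex.exp (Complex.I * ∑ p, (l p : ℂ) * (φ p : ℂ))‖₊ : ℝ≥0) : ℝ≥0∞)
            ≤ ∑' l : Fin d → ℤ, blockSup T (l, j - j') := by
        refine ENNReal.tsum_le_tsum fun l => ?_
        rw [nnnorm_mul, hexp φ l, mul_one]
        exact le_trans (entry_le_opNorm0 (blk (Th l) j j') a a') (hblk l j j')
      have hone : (1:ℝ≥0∞) ≤ ((ang szZ (j - j') : ℕ) : ℝ≥0∞) ^ s := by
        calc (1:ℝ≥0∞) = (1:ℝ≥0∞) ^ s := (ENNReal.one_rpow s).symm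
          _ ≤ ((ang szZ (j - j') : ℕ) : ℝ≥0∞) ^ s := by
              refine ENNReal.rpow_le_rpow ?_ hs
              exact_mod_cast Nat.one_le_iff_ne_zero.mpr (by simp [ang])
      have h2 : ∑' l : Fin d → ℤ, blockSup T (l, j - j')
          ≤ (F (j - j')) ^ (1/2:ℝ) * K ^ (1/2:ℝ) :=
        le_trans (le_mul_of_one_le_left' hone) (hCS (j - j'))
      refine ne_top_of_le_ne_top ?_ (le_trans hle h2)
      exact ENNReal.mul_ne_top
        (ENNReal.rpow_ne_top_of_nonneg (by norm_num) (ne_top_of_le_ne_top hD (hFD _)))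
        (ENNReal.rpow_ne_top_of_nonneg (by norm_num) hK)
    exact Summable.of_nnnorm (ENNReal.tsum_coe_ne_top_iff_summable.mp hbound)
  · intro φ
    refine le_trans (main φ) ?_
    rw [ENNReal.coe_toNNReal hCne]
end
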